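/- Let Y be a finite set and let W : {0,1} × Y → ℝ be a BIOS channel with strictly positive transition probabilities W(x,y) > 0 admitting an involution π with W(1,y) = W(0,π(y)). Define the capacity C = Σ_{y∈Y} [½W(0,y) log₂(W(0,y)/Q(y)) + ½W(1,y) log₂(W(1,y)/Q(y))] where Q(y) = ½(W(0,y)+W(1,y)), and for γ ∈ [0,1] define E₀(γ) = -log₂ Σ_{y∈Y} (½W(0,y)^{1/(1+γ)} + ½W(1,y)^{1/(1+γ)})^{1+γ}. Then for every real R with 0 ≤ R < C, there exists γ ∈ (0,1] such that E₀(γ) - γR > 0; that is, the random coding exponent E_r(R) = max_{0≤γ≤1}[E₀(γ) - γR] is strictly positive whenever R < C. -/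

import Mathlib

open Filter Topology

lemma aux_rpow_deriv {w : ℝ} (hw : 0 < w) :
    HasDerivAt (fun γ : ℝ => w ^ (1 / (1 + γ))) (-(w * Real.log w)) 0 := by
  have h1 : HasDerivAt (fun γ : ℝ => 1 + γ) 1 0 := by
    simpa using (hasDerivAt_id (0:ℝ)).const_add 1
  have h2 : HasDerivAt (fun γ : ℝ => 1 / (1 + γ)) (-1) 0 := by
    have := h1.inv (by norm_num)
    simpa [one_div, Pi.inv_def] using this
  have := (hasDerivAt_const (0:ℝ) w).rpow h2 hw
  norm_num at this
  simpa [one_div] using this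

/-- For a BIOS channel with strictly positive transition probabilities,
capacity `C = Σ_y [½W(0,y)log₂(W(0,y)/Q(y)) + ½W(1,y)log₂(W(1,y)/Q(y))]` with
`Q(y) = ½(W(0,y)+W(1,y))`, and Gallager function
`E₀(γ) = -log₂ Σ_y (½W(0,y)^{1/(1+γ)} + ½W(1,y)^{1/(1+γ)})^{1+γ}`:
for every `0 ≤ R < C` there exists `γ ∈ (0,1]` with `E₀(γ) - γR > 0`, i.e. the random
coding exponent `E_r(R)` is strictly positive whenever `R < C`.
The input `0` is encoded as `false` and `1` as `true`. -/
theorem stmt_6 {Y : Type*} [Fintype Y] (W : Bool → Y → ℝ)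
    (hpos : ∀ x y, 0 < W x y) (hsum : ∀ x, ∑ y, W x y = 1)
    (π : Y → Y) (hinv : ∀ y, π (π y) = y) (hsym : ∀ y, W true y = W false (π y))
    (R : ℝ) (hR0 : 0 ≤ R)
    (hRC : R < ∑ y, ((1 / 2) * W false y *
          Real.logb 2 (W false y / ((1 / 2) * (W false y + W true y)))
        + (1 / 2) * W true y *
          Real.logb 2 (W true y / ((1 / 2) * (W false y + W true y))))) :
    ∃ γ : ℝ, 0 < γ ∧ γ ≤ 1 ∧
      0 < (- Real.logb 2 (∑ y, ((1 / 2) * (W false y) ^ (1 / (1 + γ))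
              + (1 / 2) * (W true y) ^ (1 / (1 + γ))) ^ (1 + γ))) - γ * R := by
  have hW0 : ∀ y, (0:ℝ) < W false y := fun y => hpos false y
  have hW1 : ∀ y, (0:ℝ) < W true y := fun y => hpos true y
  set Cap : ℝ := ∑ y, ((1 / 2) * W false y *
          Real.logb 2 (W false y / ((1 / 2) * (W false y + W true y)))
        + (1 / 2) * W true y *
          Real.logb 2 (W true y / ((1 / 2) * (W false y + W true y)))) with hCap
  set F : ℝ → ℝ := fun γ => ∑ y, ((1 / 2) * (W false y) ^ (1 / (1 + γ))
              + (1 / 2) * (W true y) ^ (1 / (1 + γ))) ^ (1 + γ) with hFdef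
  have hq : ∀ y, (0:ℝ) < (1/2) * (W false y + W true y) := fun y => by
    have := hW0 y; have := hW1 y; linarith
  -- F 0 = 1
  have hF0 : F 0 = 1 := by
    rw [hFdef]
    norm_num [Real.rpow_one]
    rw [Finset.sum_add_distrib, ← Finset.mul_sum, ← Finset.mul_sum, hsum, hsum]
    norm_num
  -- derivative of F at 0
  set D : Y → ℝ := fun y =>
      (1/2) * (W false y + W true y) * Real.log ((1/2) * (W false y + W true y))
      - ((1/2) * W false y * Real.log (W false y) + (1/2) * W true y * Real.log (W true y))
    with hDdef
  have hFD : HasDerivAt F (∑ y, D y) 0 := by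
    rw [hFdef]
    apply HasDerivAt.fun_sum
    intro y _
    have ha : HasDerivAt (fun γ : ℝ => (1/2) * (W false y) ^ (1/(1+γ))
          + (1/2) * (W true y) ^ (1/(1+γ)))
        ((1/2) * (-(W false y * Real.log (W false y)))
          + (1/2) * (-(W true y * Real.log (W true y)))) 0 :=
      ((aux_rpow_deriv (hW0 y)).const_mul _).add ((aux_rpow_deriv (hW1 y)).const_mul _)
    have hg : HasDerivAt (fun γ : ℝ => 1 + γ) 1 0 := by
      simpa using (hasDerivAt_id (0:ℝ)).const_add 1
    have hfx : (0:ℝ) < (1/2) * (W false y) ^ (1/(1+(0:ℝ)))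
        + (1/2) * (W true y) ^ (1/(1+(0:ℝ))) := by
      have := (hW0 y); have := (hW1 y); positivity
    have h := ha.rpow hg hfx
    norm_num [Real.rpow_one] at h ⊢
    refine h.congr_deriv ?_
    rw [hDdef]
    ring
  have hF0ne : F 0 ≠ 0 := by rw [hF0]; norm_num
  have hlog : HasDerivAt (fun γ => Real.log (F γ)) ((∑ y, D y) / F 0) 0 := hFD.log hF0ne
  rw [hF0, div_one] at hlog
  have hlog2 : Real.log 2 ≠ 0 := ne_of_gt (Real.log_pos (by norm_num))
  -- Cap = -(∑ D)/log 2
  have hCapval : Cap = -(∑ y, D y) / Real.log 2 := by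
    rw [hCap, ← Finset.sum_neg_distrib, Finset.sum_div]
    apply Finset.sum_congr rfl
    intro y _
    rw [hDdef]
    rw [Real.logb, Real.logb, Real.log_div (ne_of_gt (hW0 y)) (ne_of_gt (hq y)),
      Real.log_div (ne_of_gt (hW1 y)) (ne_of_gt (hq y))]
    field_simp
    ring
  -- derivative of g
  have hg : HasDerivAt (fun γ : ℝ => - Real.logb 2 (F γ) - γ * R) (Cap - R) 0 := by
    have h1 : HasDerivAt (fun γ : ℝ => - Real.logb 2 (F γ)) Cap 0 := by
      have := ((hlog.div_const (Real.log 2)).neg)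
      rw [hCapval]
      simpa [Real.logb, neg_div, Pi.neg_def] using this
    have h2 : HasDerivAt (fun γ : ℝ => γ * R) R 0 := by
      simpa using (hasDerivAt_id (0:ℝ)).mul_const R
    exact h1.sub h2
  have hD0 : 0 < Cap - R := sub_pos.mpr hRC
  have hslope := hasDerivAt_iff_tendsto_slope.mp hg
  have hslope' : Tendsto (slope (fun γ : ℝ => - Real.logb 2 (F γ) - γ * R) 0) (𝓝[>] 0)
      (𝓝 (Cap - R)) :=
    hslope.mono_left (nhdsWithin_mono _ (fun x hx => ne_of_gt hx))
  have h1 : ∀ᶠ γ in 𝓝[>] (0:ℝ),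
      0 < slope (fun γ : ℝ => - Real.logb 2 (F γ) - γ * R) 0 γ :=
    hslope'.eventually (eventually_gt_nhds hD0)
  have h2 : ∀ᶠ γ in 𝓝[>] (0:ℝ), γ ≤ 1 := by
    filter_upwards [Ioo_mem_nhdsGT_of_mem (by norm_num : (0:ℝ) ∈ Set.Ico 0 1)] with x hx
    exact le_of_lt hx.2
  have h3 : ∀ᶠ γ in 𝓝[>] (0:ℝ), 0 < γ := eventually_mem_nhdsWithin
  obtain ⟨γ, hsl, hγ1, hγ0⟩ := (h1.and (h2.and h3)).exists
  refine ⟨γ, hγ0, hγ1, ?_⟩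
  have hg00 : (fun γ : ℝ => - Real.logb 2 (F γ) - γ * R) 0 = 0 := by
    simp [hF0]
  have hsl' : 0 < (- Real.logb 2 (F γ) - γ * R) / γ := by
    have := hsl
    rw [slope_def_field] at this
    simpa [hF0] using this
  have hpos' : 0 < - Real.logb 2 (F γ) - γ * R := by
    have := mul_pos hsl' hγ0
    rwa [div_mul_cancel₀ _ (ne_of_gt hγ0)] at this
  have hFγ : F γ = ∑ y, ((1 / 2) * (W false y) ^ (1 / (1 + γ))
              + (1 / 2) * (W true y) ^ (1 / (1 + γ))) ^ (1 + γ) := by rw [hFdef]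
  rwa [hFγ] at hpos'
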